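/- Let β = (β_n) be a Cantor real base. The quasi-greedy β-expansion d*_β(1) is a β-representation of 1, i.e., val_β(d*_β(1)) = 1. -/

import Mathlib

open Filter

/-- Product of the first `n+1` terms of the base sequence. -/
noncomputable def cprod (β : ℕ → ℝ) (n : ℕ) : ℝ := ∏ i ∈ Finset.range (n+1), β i

/-- A Cantor real base: all terms exceed 1 and the partial products tend to infinity. -/
def IsCantorBase (β : ℕ → ℝ) : Prop :=
  (∀ n, 1 < β n) ∧ Tendsto (cprod β) atTop atTop

/-- Value of a real-digit sequence in a Cantor base. -/
noncomputable def valB (β : ℕ → ℝ) (a : ℕ → ℝ) : ℝ := ∑' n, a n / cprod β n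

/-- Value of a natural-digit sequence in a Cantor base. -/
noncomputable def valN (β : ℕ → ℝ) (a : ℕ → ℕ) : ℝ := valB β (fun n => (a n : ℝ))

/-- Remainders of the greedy algorithm. -/
noncomputable def greedyRem (β : ℕ → ℝ) (x : ℝ) : ℕ → ℝ
  | 0 => β 0 * x - ⌊β 0 * x⌋
  | n+1 => β (n+1) * greedyRem β x n - ⌊β (n+1) * greedyRem β x n⌋

/-- Digits of the greedy expansion. -/
noncomputable def greedy (β : ℕ → ℝ) (x : ℝ) : ℕ → ℕ
  | 0 => (⌊β 0 * x⌋).toNat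
  | n+1 => (⌊β (n+1) * greedyRem β x n⌋).toNat

/-- Remainders of the quasi-greedy algorithm started at `1`:
at each step the largest digit keeping the remainder strictly positive is chosen. -/
noncomputable def qRem (β : ℕ → ℝ) : ℕ → ℝ
  | 0 => β 0 - (⌈β 0⌉ - 1)
  | n+1 => β (n+1) * qRem β n - (⌈β (n+1) * qRem β n⌉ - 1)

/-- Digits of the quasi-greedy expansion of `1`. -/
noncomputable def quasiGreedy (β : ℕ → ℝ) : ℕ → ℕ
  | 0 => (⌈β 0⌉ - 1).toNat
  | n+1 => (⌈β (n+1) * qRem β n⌉ - 1).toNat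

/-- The `n`-shifted base `β^{(n)}`. -/
def shiftBase (β : ℕ → ℝ) (n : ℕ) : ℕ → ℝ := fun k => β (n + k)

/-- The `n`-fold shift `σ^n` of a digit sequence. -/
def shiftSeq (a : ℕ → ℕ) (n : ℕ) : ℕ → ℕ := fun k => a (n + k)

/-- Strict lexicographic order on digit sequences. -/
def LexLt (a b : ℕ → ℕ) : Prop := ∃ ℓ, (∀ k, k < ℓ → a k = b k) ∧ a ℓ < b ℓ

/-- Lexicographic order on digit sequences. -/
def LexLe (a b : ℕ → ℕ) : Prop := LexLt a b ∨ a = b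

/-- The set of greedy expansions of points of `[0,1)`. -/
def Dset (β : ℕ → ℝ) : Set (ℕ → ℕ) := {a | ∃ x ∈ Set.Ico (0:ℝ) 1, a = greedy β x}


lemma qRem_pos_le (β : ℕ → ℝ) : ∀ n, 0 < qRem β n ∧ qRem β n ≤ 1 := by
  intro n
  have key : ∀ x : ℝ, 0 < x - (⌈x⌉ - 1) ∧ x - (⌈x⌉ - 1) ≤ 1 := by
    intro x
    constructor
    · have := Int.ceil_lt_add_one x
      linarith
    · have := Int.le_ceil x
      linarith
  cases n with
  | zero => exact key (β 0)
  | succ m => exact key (β (m+1) * qRem β m)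

lemma cprod_pos (β : ℕ → ℝ) (hβ : ∀ n, 1 < β n) (n : ℕ) : 0 < cprod β n := by
  refine Finset.prod_pos ?_
  intro i _
  linarith [hβ i]

lemma partial_sum_eq (β : ℕ → ℝ) (hβ : ∀ n, 1 < β n) (n : ℕ) :
    ∑ k ∈ Finset.range (n+1), (quasiGreedy β k : ℝ) / cprod β k
      = 1 - qRem β n / cprod β n := by
  induction n with
  | zero =>
    have hb0 : 0 < β 0 := by linarith [hβ 0]
    have hc : (2 : ℤ) ≤ ⌈β 0⌉ := by
      have : (1:ℤ) < ⌈β 0⌉ := Int.lt_ceil.mpr (by exact_mod_cast hβ 0)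
      omega
    have hcast : ((⌈β 0⌉ - 1).toNat : ℝ) = (⌈β 0⌉ : ℝ) - 1 := by
      have h1 : (0:ℤ) ≤ ⌈β 0⌉ - 1 := by omega
      rw [show ((⌈β 0⌉ - 1).toNat : ℝ) = ((((⌈β 0⌉ - 1).toNat : ℤ)) : ℝ) by norm_cast,
        Int.toNat_of_nonneg h1]
      push_cast; ring
    rw [Finset.sum_range_one, show quasiGreedy β 0 = (⌈β 0⌉ - 1).toNat from rfl, hcast,
      show cprod β 0 = β 0 from by simp [cprod],
      show qRem β 0 = β 0 - ((⌈β 0⌉ : ℝ) - 1) from rfl]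
    field_simp
    ring
  | succ m ih =>
    have hqm := qRem_pos_le β m
    have hx : 0 < β (m+1) * qRem β m := mul_pos (by linarith [hβ (m+1)]) hqm.1
    have hc : (1 : ℤ) ≤ ⌈β (m+1) * qRem β m⌉ := by
      have : (0:ℤ) < ⌈β (m+1) * qRem β m⌉ := Int.lt_ceil.mpr (by exact_mod_cast hx)
      omega
    have hcast : ((⌈β (m+1) * qRem β m⌉ - 1).toNat : ℝ)
        = (⌈β (m+1) * qRem β m⌉ : ℝ) - 1 := by
      have h1 : (0:ℤ) ≤ ⌈β (m+1) * qRem β m⌉ - 1 := by omega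
      rw [show ((⌈β (m+1) * qRem β m⌉ - 1).toNat : ℝ)
          = ((((⌈β (m+1) * qRem β m⌉ - 1).toNat : ℤ)) : ℝ) by norm_cast,
        Int.toNat_of_nonneg h1]
      push_cast; ring
    have hcp : cprod β (m+1) = cprod β m * β (m+1) := by
      simp [cprod, Finset.prod_range_succ]
    rw [Finset.sum_range_succ, ih]
    have hcm : 0 < cprod β m := cprod_pos β hβ m
    have hbm : 0 < β (m+1) := by linarith [hβ (m+1)]
    have hq : qRem β (m+1) = β (m+1) * qRem β m - (⌈β (m+1) * qRem β m⌉ - 1) := rfl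
    rw [show quasiGreedy β (m+1) = (⌈β (m+1) * qRem β m⌉ - 1).toNat from rfl, hcast, hcp, hq]
    field_simp
    ring

theorem stmt_11 (β : ℕ → ℝ) (hβ : IsCantorBase β) :
    Summable (fun n => (quasiGreedy β n : ℝ) / cprod β n) ∧ valN β (quasiGreedy β) = 1 := by
  obtain ⟨h1, h2⟩ := hβ
  have hnonneg : ∀ n, 0 ≤ (quasiGreedy β n : ℝ) / cprod β n := fun n =>
    div_nonneg (Nat.cast_nonneg _) (le_of_lt (cprod_pos β h1 n))
  have hsum : Summable (fun n => (quasiGreedy β n : ℝ) / cprod β n) := by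
    refine summable_of_sum_range_le (c := 1) hnonneg ?_
    intro n
    cases n with
    | zero => simp
    | succ m =>
      rw [partial_sum_eq β h1 m]
      have := (qRem_pos_le β m).1
      have := cprod_pos β h1 m
      have : 0 < qRem β m / cprod β m := div_pos ‹0 < qRem β m› ‹0 < cprod β m›
      linarith
  refine ⟨hsum, ?_⟩
  have hlim : Tendsto (fun n => ∑ k ∈ Finset.range (n+1),
      (quasiGreedy β k : ℝ) / cprod β k) atTop (nhds 1) := by
    have h0 : Tendsto (fun n => qRem β n / cprod β n) atTop (nhds 0) := by
      apply squeeze_zero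
      · intro n; exact le_of_lt (div_pos (qRem_pos_le β n).1 (cprod_pos β h1 n))
      · intro n
        exact div_le_div_of_nonneg_right (qRem_pos_le β n).2 (cprod_pos β h1 n).le
      · have h3 : Tendsto (fun n => (cprod β n)⁻¹) atTop (nhds 0) := h2.inv_tendsto_atTop
        simpa using h3
    have := (tendsto_const_nhds (x := (1:ℝ)) (f := atTop)).sub h0
    simp only [sub_zero] at this
    exact Tendsto.congr (fun n => (partial_sum_eq β h1 n).symm) this
  have hlim2 : Tendsto (fun n => ∑ k ∈ Finset.range n,
      (quasiGreedy β k : ℝ) / cprod β k) atTop (nhds 1) := by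
    rwa [← tendsto_add_atTop_iff_nat 1]
  have := hsum.hasSum.tendsto_sum_nat
  exact tendsto_nhds_unique this hlim2
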